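/- The ℂ-algebra endomorphism of ℂ[x,y] given by x→x, y→yx²+y (i.e., y → y(x+i)(x−i)) is a product of simple affine contractions: it is a composition of finitely many maps each of which is either a ℂ-algebra automorphism of ℂ[x,y] or the map τ_x given by x→x, y→xy. -/

import Mathlib

/-- The map `τ_x : x ↦ x, y ↦ xy`, as a `K`-algebra endomorphism of `K[x,y]`. -/
noncomputable def tauX (K : Type*) [Field K] :
    MvPolynomial (Fin 2) K →ₐ[K] MvPolynomial (Fin 2) K :=
  MvPolynomial.aeval ![MvPolynomial.X 0, MvPolynomial.X 0 * MvPolynomial.X 1]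

/-- A simple affine contraction: a `K`-algebra endomorphism of `K[x,y]` that is either a
`K`-algebra automorphism or the map `τ_x : x ↦ x, y ↦ xy`. -/
def IsSimpleAffineContraction {K : Type*} [Field K]
    (ψ : MvPolynomial (Fin 2) K →ₐ[K] MvPolynomial (Fin 2) K) : Prop :=
  (∃ e : MvPolynomial (Fin 2) K ≃ₐ[K] MvPolynomial (Fin 2) K, ψ = e) ∨ ψ = tauX K

/-- `φ` is a composition of finitely many simple affine contractions. -/
def IsProdOfSAC {K : Type*} [Field K]
    (φ : MvPolynomial (Fin 2) K →ₐ[K] MvPolynomial (Fin 2) K) : Prop :=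
  ∃ L : List (MvPolynomial (Fin 2) K →ₐ[K] MvPolynomial (Fin 2) K),
    (∀ ψ ∈ L, IsSimpleAffineContraction ψ) ∧
    φ = L.foldr AlgHom.comp (AlgHom.id K (MvPolynomial (Fin 2) K))

open MvPolynomial

/-- Translation `x ↦ x + c, y ↦ y` as an algebra hom. -/
noncomputable def shiftH (c : ℂ) :
    MvPolynomial (Fin 2) ℂ →ₐ[ℂ] MvPolynomial (Fin 2) ℂ :=
  aeval ![X 0 + C c, X 1]

lemma shiftH_comp (c : ℂ) :
    (shiftH c).comp (shiftH (-c)) = AlgHom.id ℂ (MvPolynomial (Fin 2) ℂ) := by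
  apply MvPolynomial.algHom_ext
  intro i
  fin_cases i <;>
    simp [shiftH, map_add, MvPolynomial.aeval_C, MvPolynomial.algebraMap_eq]

/-- Translation as an algebra automorphism. -/
noncomputable def shiftE (c : ℂ) :
    MvPolynomial (Fin 2) ℂ ≃ₐ[ℂ] MvPolynomial (Fin 2) ℂ :=
  AlgEquiv.ofAlgHom (shiftH c) (shiftH (-c)) (shiftH_comp c)
    (by simpa using shiftH_comp (-c))

set_option maxHeartbeats 1000000 in
open Complex in
/-- Over `ℂ`, the endomorphism `x ↦ x, y ↦ yx² + y` of `ℂ[x,y]`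
(i.e. `y ↦ y(x + i)(x − i)`) is a product of simple affine contractions. -/
theorem complex_example_is_prodSAC :
    IsProdOfSAC (MvPolynomial.aeval ![X 0, X 1 * X 0 ^ 2 + X 1] :
        MvPolynomial (Fin 2) ℂ →ₐ[ℂ] MvPolynomial (Fin 2) ℂ) := by
  refine ⟨[(shiftE (-I) : _ →ₐ[ℂ] _), tauX ℂ, (shiftE I : _ →ₐ[ℂ] _),
      (shiftE I : _ →ₐ[ℂ] _), tauX ℂ, (shiftE (-I) : _ →ₐ[ℂ] _)], ?_, ?_⟩
  · intro ψ hψ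
    simp only [List.mem_cons, List.not_mem_nil, or_false] at hψ
    rcases hψ with h | h | h | h | h | h <;> subst h
    · exact Or.inl ⟨shiftE (-I), rfl⟩
    · exact Or.inr rfl
    · exact Or.inl ⟨shiftE I, rfl⟩
    · exact Or.inl ⟨shiftE I, rfl⟩
    · exact Or.inr rfl
    · exact Or.inl ⟨shiftE (-I), rfl⟩
  · apply MvPolynomial.algHom_ext
    intro i
    fin_cases i <;>
      · simp only [List.foldr, AlgHom.comp_apply, shiftE, AlgEquiv.ofAlgHom_coe_algHom,
          AlgEquiv.coe_algHom]
        simp [shiftH, tauX, map_add, map_mul, MvPolynomial.aeval_C,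
          MvPolynomial.algebraMap_eq, Complex.I_sq]
        try (ring_nf; simp [← MvPolynomial.C_pow, Complex.I_sq]; ring)
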